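/- Work-difference identity (Eq. (A.3.3) of the paper, classical form): W_nonid − W_Λ = ∑ l m, (r l − p l) * P l m * Ef m, where r l = ∑ n, p n * q l n is the diagonal of the unconditional post-measurement state of the first measurement. -/
import Mathlib


open Finset

/-- Work-difference identity (Eq. (A.3.3), classical form):
`W_nonid − W_Λ = ∑ l m, (r l − p l) * P l m * Ef m`, where
`r l = ∑ n, p n * q l n` is the diagonal of the unconditional
post-measurement state of the first measurement. -/
theorem nonideal_work_difference
    (d : ℕ) (hd : 1 ≤ d) (E0 Ef : Fin d → ℝ) (β : ℝ) (hβ : 0 < β)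
    (p : Fin d → ℝ)
    (hp : ∀ n, p n = Real.exp (-β * E0 n) / ∑ k, Real.exp (-β * E0 k))
    (P : Fin d → Fin d → ℝ)
    (hP0 : ∀ l m, 0 ≤ P l m) (hP1 : ∀ l, ∑ m, P l m = 1)
    (q : Fin d → Fin d → ℝ)
    (hq0 : ∀ l n, 0 ≤ q l n) (hq1 : ∀ n, ∑ l, q l n = 1)
    (r : Fin d → ℝ) (hr : ∀ l, r l = ∑ n, p n * q l n) :
    (∑ n, ∑ m, ∑ l, p n * q l n * P l m * (Ef m - E0 n)) -
      (∑ n, ∑ m, p n * P n m * (Ef m - E0 n)) =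
      ∑ l, ∑ m, (r l - p l) * P l m * Ef m := by
  have h2 : (∑ n, ∑ m, p n * P n m * (Ef m - E0 n))
      = (∑ l, ∑ m, p l * P l m * Ef m) - ∑ n, p n * E0 n := by
    simp only [mul_sub, Finset.sum_sub_distrib]
    congr 1
    refine Finset.sum_congr rfl fun n _ => ?_
    calc ∑ m, p n * P n m * E0 n = (∑ m, P n m) * (p n * E0 n) := by
          rw [Finset.sum_mul]; exact Finset.sum_congr rfl fun m _ => by ring
      _ = p n * E0 n := by rw [hP1]; ring
  have h1 : (∑ n, ∑ m, ∑ l, p n * q l n * P l m * (Ef m - E0 n))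
      = (∑ l, ∑ m, r l * P l m * Ef m) - ∑ n, p n * E0 n := by
    simp only [mul_sub, Finset.sum_sub_distrib]
    congr 1
    · calc ∑ n, ∑ m, ∑ l, p n * q l n * P l m * Ef m
          = ∑ n, ∑ l, ∑ m, p n * q l n * P l m * Ef m :=
            Finset.sum_congr rfl fun n _ => Finset.sum_comm
        _ = ∑ l, ∑ n, ∑ m, p n * q l n * P l m * Ef m := Finset.sum_comm
        _ = ∑ l, ∑ m, ∑ n, p n * q l n * P l m * Ef m :=
            Finset.sum_congr rfl fun l _ => Finset.sum_comm
        _ = ∑ l, ∑ m, r l * P l m * Ef m := by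
            refine Finset.sum_congr rfl fun l _ => Finset.sum_congr rfl fun m _ => ?_
            rw [hr, Finset.sum_mul, Finset.sum_mul]
    · refine Finset.sum_congr rfl fun n _ => ?_
      calc ∑ m, ∑ l, p n * q l n * P l m * E0 n
          = ∑ l, ∑ m, p n * q l n * P l m * E0 n := Finset.sum_comm
        _ = ∑ l, (p n * q l n * E0 n) * ∑ m, P l m := by
            refine Finset.sum_congr rfl fun l _ => ?_
            rw [Finset.mul_sum]; exact Finset.sum_congr rfl fun m _ => by ring
        _ = ∑ l, q l n * (p n * E0 n) := by
            refine Finset.sum_congr rfl fun l _ => ?_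
            rw [hP1]; ring
        _ = p n * E0 n := by rw [← Finset.sum_mul, hq1, one_mul]
  rw [h1, h2]
  simp only [sub_mul, Finset.sum_sub_distrib]
  ring
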